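/- Let g₊ and g₋ be C² conformal metrics on a Riemann surface Σ and φ a holomorphic k-differential (k ≥ 1), such that κ_{g₊} ≥ −1 + ‖φ‖²_{g₊}, κ_{g₋} ≤ −1 + ‖φ‖²_{g₋}, and κ_{g₊} ≤ 0 (equivalently ‖φ‖²_{g₊} ≤ 1). Write g₋ = e^w g₊. Then w satisfies (1/2)Δ_{g₊} w ≥ f(w) where f(t) = e^t − 1 for t ≥ 0 and f(t) = e^t − e^{(1−k)t} for t ≤ 0; in particular f is continuous, f(t) > 0 for t > 0, and f(t) ≤ 0 iff t ≤ 0. -/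

import Mathlib

/-- The Euclidean Laplacian of `f : ℂ → ℝ` at `z`, computed as the sum of the
second derivatives along the real and imaginary coordinate directions. -/
noncomputable def lapC (f : ℂ → ℝ) (z : ℂ) : ℝ :=
  deriv (deriv (fun t : ℝ => f (z + t))) 0 +
  deriv (deriv (fun t : ℝ => f (z + t * Complex.I))) 0

/-- The curvature of the conformal metric `e^u|dz|²`:
`κ = −(1/2)e^{−u}Δu`. -/
noncomputable def curvature (u : ℂ → ℝ) (z : ℂ) : ℝ :=
  -(1 / 2) * Real.exp (-u z) * lapC u z

lemma deriv2_sub {F G : ℝ → ℝ} (hF : ContDiffAt ℝ 2 F 0) (hG : ContDiffAt ℝ 2 G 0) :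
    deriv (deriv (fun t => F t - G t)) 0 = deriv (deriv F) 0 - deriv (deriv G) 0 := by
  obtain ⟨U, hU, hFU⟩ := hF.contDiffOn le_rfl (by norm_num)
  obtain ⟨V, hV, hGV⟩ := hG.contDiffOn le_rfl (by norm_num)
  obtain ⟨s, hsUV, hso, h0s⟩ := mem_nhds_iff.mp (Filter.inter_mem hU hV)
  have hFs : ContDiffOn ℝ 2 F s := hFU.mono (fun x hx => (hsUV hx).1)
  have hGs : ContDiffOn ℝ 2 G s := hGV.mono (fun x hx => (hsUV hx).2)
  have h2 : (2 : WithTop ℕ∞) = 1 + 1 := by norm_num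
  rw [h2] at hFs hGs
  obtain ⟨hFd, -, hFd1⟩ := (contDiffOn_succ_iff_deriv_of_isOpen hso).mp hFs
  obtain ⟨hGd, -, hGd1⟩ := (contDiffOn_succ_iff_deriv_of_isOpen hso).mp hGs
  have heq : deriv (fun t => F t - G t) =ᶠ[nhds 0] fun t => deriv F t - deriv G t := by
    filter_upwards [hso.mem_nhds h0s] with t ht
    exact deriv_sub (hFd.differentiableAt (hso.mem_nhds ht))
      (hGd.differentiableAt (hso.mem_nhds ht))
  rw [heq.deriv_eq, deriv_fun_sub
    ((hFd1.differentiableOn one_ne_zero).differentiableAt (hso.mem_nhds h0s))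
    ((hGd1.differentiableOn one_ne_zero).differentiableAt (hso.mem_nhds h0s))]

lemma contDiffAt_line (u : ℂ → ℝ) {Ω : Set ℂ} (hΩ : IsOpen Ω)
    (hu : ContDiffOn ℝ 2 u Ω) {z : ℂ} (hz : z ∈ Ω) (c : ℂ) :
    ContDiffAt ℝ 2 (fun t : ℝ => u (z + t * c)) 0 := by
  have h1 : ContDiffAt ℝ 2 u (z + (0:ℝ) * c) := by
    simpa using hu.contDiffAt (hΩ.mem_nhds hz)
  exact h1.comp 0
    (contDiffAt_const.add ((Complex.ofRealCLM.contDiff.contDiffAt).mul contDiffAt_const))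

set_option maxHeartbeats 1000000 in
/-- in a conformal chart `Ω ⊆ ℂ` of the Riemann surface `Σ`:
let `g₊ = e^{u₊}|dz|²`, `g₋ = e^{u₋}|dz|²` be `C²` conformal metrics and
`φ = φ(z)dz^k` a holomorphic `k`-differential (`k ≥ 1`), with
`κ_{g₊} ≥ −1 + ‖φ‖²_{g₊}`, `κ_{g₋} ≤ −1 + ‖φ‖²_{g₋}` and `κ_{g₊} ≤ 0`
(equivalently `‖φ‖²_{g₊} ≤ 1`), where `‖φ‖²_g = |φ|²e^{−ku}`.  Writing
`g₋ = e^w g₊` (i.e. `w = u₋ − u₊`), one has `(1/2)Δ_{g₊}w ≥ f(w)` on `Ω`,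
where `Δ_{g₊}w = e^{−u₊}Δw`, `f(t) = e^t − 1` for `t ≥ 0` and
`f(t) = e^t − e^{(1−k)t}` for `t ≤ 0`; moreover `f` is continuous,
`f(t) > 0` for `t > 0`, and `f(t) ≤ 0 ↔ t ≤ 0`. -/
theorem stmt19 (k : ℕ) (hk : 1 ≤ k) (Ω : Set ℂ) (hΩ : IsOpen Ω)
    (uPlus uMinus : ℂ → ℝ)
    (hup : ContDiffOn ℝ 2 uPlus Ω) (hum : ContDiffOn ℝ 2 uMinus Ω)
    (φ : ℂ → ℂ) (hφ : DifferentiableOn ℂ φ Ω)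
    (hsuper : ∀ z ∈ Ω, curvature uPlus z ≥
      -1 + ‖φ z‖ ^ 2 * Real.exp (-(k : ℝ) * uPlus z))
    (hsubsol : ∀ z ∈ Ω, curvature uMinus z ≤
      -1 + ‖φ z‖ ^ 2 * Real.exp (-(k : ℝ) * uMinus z))
    (hnonpos : ∀ z ∈ Ω,
      ‖φ z‖ ^ 2 * Real.exp (-(k : ℝ) * uPlus z) ≤ 1)
    (w : ℂ → ℝ) (hw : ∀ z, w z = uMinus z - uPlus z)
    (f : ℝ → ℝ)
    (hf : ∀ t : ℝ, f t =
      if 0 ≤ t then Real.exp t - 1 else Real.exp t - Real.exp ((1 - (k : ℝ)) * t)) :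
    (∀ z ∈ Ω, (1 / 2) * (Real.exp (-uPlus z) * lapC w z) ≥ f (w z)) ∧
    Continuous f ∧ (∀ t : ℝ, 0 < t → 0 < f t) ∧ (∀ t : ℝ, f t ≤ 0 ↔ t ≤ 0) := by
  have hk1 : (1 : ℝ) ≤ (k : ℝ) := by exact_mod_cast hk
  have hfeq : f = fun t : ℝ =>
      if 0 ≤ t then Real.exp t - 1 else Real.exp t - Real.exp ((1 - (k : ℝ)) * t) :=
    funext hf
  refine ⟨?_, ?_, ?_, ?_⟩
  · intro z hz
    -- Laplacian linearity
    have c1m : ContDiffAt ℝ 2 (fun t : ℝ => uMinus (z + t)) 0 := by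
      simpa only [mul_one] using contDiffAt_line uMinus hΩ hum hz 1
    have c1p : ContDiffAt ℝ 2 (fun t : ℝ => uPlus (z + t)) 0 := by
      simpa only [mul_one] using contDiffAt_line uPlus hΩ hup hz 1
    have cIm : ContDiffAt ℝ 2 (fun t : ℝ => uMinus (z + t * Complex.I)) 0 :=
      contDiffAt_line uMinus hΩ hum hz Complex.I
    have cIp : ContDiffAt ℝ 2 (fun t : ℝ => uPlus (z + t * Complex.I)) 0 :=
      contDiffAt_line uPlus hΩ hup hz Complex.I
    have hwf1 : (fun t : ℝ => w (z + t)) =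
        fun t : ℝ => uMinus (z + t) - uPlus (z + t) := funext fun t => hw _
    have hwfI : (fun t : ℝ => w (z + t * Complex.I)) =
        fun t : ℝ => uMinus (z + t * Complex.I) - uPlus (z + t * Complex.I) :=
      funext fun t => hw _
    have hlap : lapC w z = lapC uMinus z - lapC uPlus z := by
      unfold lapC
      rw [hwf1, hwfI, deriv2_sub c1m c1p, deriv2_sub cIm cIp]
      ring
    have hsub := hsubsol z hz
    have hsup := hsuper z hz
    have hS1 := hnonpos z hz
    have hWab := hw z
    rw [curvature] at hsub hsup
    rw [hf (w z)]
    set a := uPlus z with ha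
    set b := uMinus z with hb
    set W := w z with hW
    set Lm := lapC uMinus z with hLm
    set Lp := lapC uPlus z with hLp
    set S := ‖φ z‖ ^ 2 * Real.exp (-(k : ℝ) * a) with hS
    have hS0 : 0 ≤ S := by positivity
    have hTS : ‖φ z‖ ^ 2 * Real.exp (-(k : ℝ) * b)
        = S * Real.exp (-(k : ℝ) * W) := by
      rw [hS, hWab, mul_assoc, ← Real.exp_add]
      congr 2
      ring
    rw [hTS] at hsub
    have hea : (0:ℝ) < Real.exp a := Real.exp_pos a
    have heb : (0:ℝ) < Real.exp b := Real.exp_pos b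
    have hepa : (0:ℝ) < Real.exp (-a) := Real.exp_pos _
    have hinvb : Real.exp (-b) * Real.exp b = 1 := by
      rw [← Real.exp_add]; simp
    have hinva : Real.exp (-a) * Real.exp a = 1 := by
      rw [← Real.exp_add]; simp
    have hexpW : Real.exp (-a) * Real.exp b = Real.exp W := by
      rw [← Real.exp_add, hWab]; congr 1; ring
    have hexp1k : Real.exp (-(k : ℝ) * W) * Real.exp W
        = Real.exp ((1 - (k : ℝ)) * W) := by
      rw [← Real.exp_add]; congr 1; ring
    -- h1 : (1 - S e^{-kW}) e^b ≤ (1/2) Lm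
    have e1 : (-(1/2) * Real.exp (-b) * Lm) * Real.exp b = -(1/2) * Lm := by
      linear_combination (-(1/2) * Lm) * hinvb
    have h1 : (1 - S * Real.exp (-(k : ℝ) * W)) * Real.exp b ≤ (1 / 2) * Lm := by
      have h := mul_le_mul_of_nonneg_right hsub heb.le
      rw [e1] at h
      linarith
    -- h2 : (-1 + S) e^a ≤ -(1/2) Lp
    have e2 : (-(1/2) * Real.exp (-a) * Lp) * Real.exp a = -(1/2) * Lp := by
      linear_combination (-(1/2) * Lp) * hinva
    have h2 : (-1 + S) * Real.exp a ≤ -(1 / 2) * Lp := by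
      have h := mul_le_mul_of_nonneg_right hsup hea.le
      rw [e2] at h
      linarith
    have key : Real.exp W - S * Real.exp ((1 - (k : ℝ)) * W) - 1 + S
        ≤ (1 / 2) * (Real.exp (-a) * lapC w z) := by
      have h3 : Real.exp (-a) * ((1 - S * Real.exp (-(k:ℝ) * W)) * Real.exp b)
          + Real.exp (-a) * ((-1 + S) * Real.exp a)
          ≤ (1 / 2) * (Real.exp (-a) * lapC w z) := by
        rw [hlap]
        nlinarith [mul_le_mul_of_nonneg_left h1 hepa.le,
          mul_le_mul_of_nonneg_left h2 hepa.le]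
      have h4 : Real.exp W - S * Real.exp ((1 - (k : ℝ)) * W) - 1 + S
          = Real.exp (-a) * ((1 - S * Real.exp (-(k:ℝ) * W)) * Real.exp b)
          + Real.exp (-a) * ((-1 + S) * Real.exp a) := by
        linear_combination (-(1 - S * Real.exp (-(k:ℝ) * W))) * hexpW
          + (1 - S) * hinva + S * hexp1k
      linarith [h3, h4.le]
    by_cases hW0 : 0 ≤ W
    · rw [if_pos hW0]
      have hle : Real.exp ((1 - (k:ℝ)) * W) ≤ 1 := by
        have := Real.exp_le_exp.mpr (show (1 - (k:ℝ)) * W ≤ 0 by nlinarith)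
        rwa [Real.exp_zero] at this
      have := mul_nonneg hS0 (sub_nonneg.mpr hle)
      linarith [key, this]
    · rw [if_neg hW0]
      have hWn : W < 0 := not_le.mp hW0
      have hge : (1:ℝ) ≤ Real.exp ((1 - (k:ℝ)) * W) := by
        have := Real.exp_le_exp.mpr (show (0:ℝ) ≤ (1 - (k:ℝ)) * W by nlinarith)
        rwa [Real.exp_zero] at this
      have := mul_nonneg (sub_nonneg.mpr hS1) (sub_nonneg.mpr hge)
      nlinarith [key, this]
  · rw [hfeq]
    apply Continuous.if_le
    · exact Real.continuous_exp.sub continuous_const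
    · exact Real.continuous_exp.sub
        (Real.continuous_exp.comp (continuous_const.mul continuous_id))
    · exact continuous_const
    · exact continuous_id
    · intro x hx; simp [← hx]
  · intro t ht
    rw [hf t, if_pos ht.le]
    have : (1:ℝ) < Real.exp t := by
      have := Real.exp_lt_exp.mpr ht
      rwa [Real.exp_zero] at this
    linarith
  · intro t
    rw [hf t]
    by_cases ht : 0 ≤ t
    · rw [if_pos ht]
      constructor
      · intro h
        have h1 : Real.exp t ≤ Real.exp 0 := by rw [Real.exp_zero]; linarith
        have := Real.exp_le_exp.mp h1
        linarith
      · intro h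
        have h0 : t = 0 := le_antisymm h ht
        simp [h0]
    · rw [if_neg ht]
      have htn : t < 0 := not_le.mp ht
      constructor
      · intro _; exact htn.le
      · intro _
        have : Real.exp t ≤ Real.exp ((1 - (k:ℝ)) * t) :=
          Real.exp_le_exp.mpr (by nlinarith)
        linarith
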